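/- (Throughput upper bound T ≤ Nr/(f·d*) for all-to-all traffic.) Let G be a connected r-regular simple graph on N ≥ 2 vertices. Consider the all-to-all family of commodities consisting of one commodity for every ordered pair (u,v) of distinct vertices, and let (g_{(u,v)}) be a concurrent multicommodity flow respecting unit capacities in which every commodity's value is at least T ≥ 0. Then for every integer k ≥ 1, T · ( ∑_{j=1}^{k−1} j·r(r−1)^{j−1} + k·R ) ≤ r, where R := (N−1) − ∑_{j=1}^{k−1} r(r−1)^{j−1}. -/

import Mathlib

open Finset

/-- A flow from `s` to `t` of value `x` on the simple graph `G`: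
nonnegative, supported on adjacent pairs, conserved at internal vertices,
with net outflow `x` at `s`. -/
def IsFlow {V : Type*} [Fintype V] (G : SimpleGraph V) (s t : V) (x : ℝ)
    (g : V → V → ℝ) : Prop :=
  (∀ u v, 0 ≤ g u v) ∧
  (∀ u v, ¬ G.Adj u v → g u v = 0) ∧
  (∀ w, w ≠ s → w ≠ t → (∑ u, g u w) = (∑ v, g w v)) ∧
  ((∑ v, g s v) - (∑ u, g u s) = x)

lemma aux_exists_adj_dist {V : Type*} {G : SimpleGraph V} (hconn : G.Connected)
    {u v : V} {j : ℕ} (h : G.dist u v = j + 1) :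
    ∃ w, G.Adj w v ∧ G.dist u w = j := by
  obtain ⟨p, hp⟩ := hconn.exists_walk_length_eq_dist v u
  rw [SimpleGraph.dist_comm] at hp
  cases p with
  | nil => rw [h] at hp; simp at hp
  | @cons _ w _ hadj q =>
    refine ⟨w, hadj.symm, ?_⟩
    simp only [SimpleGraph.Walk.length_cons, h] at hp
    have hle : G.dist u w ≤ j := by
      have := SimpleGraph.dist_le q.reverse
      simpa [Nat.succ_injective hp] using this
    have hge : j + 1 ≤ G.dist u w + 1 := by
      calc j + 1 = G.dist u v := h.symm
        _ ≤ G.dist u w + G.dist w v := hconn.dist_triangle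
        _ = G.dist u w + 1 := by rw [SimpleGraph.dist_eq_one_iff_adj.mpr hadj.symm]
    omega

lemma aux_sphere_card {V : Type*} [Fintype V] [DecidableEq V] {G : SimpleGraph V}
    [DecidableRel G.Adj] {r : ℕ} (hconn : G.Connected) (hreg : G.IsRegularOfDegree r)
    (u : V) : ∀ j, 1 ≤ j →
    (univ.filter (fun v => G.dist u v = j)).card ≤ r * (r - 1) ^ (j - 1) := by
  intro j
  induction j with
  | zero => omega
  | succ j ih =>
    intro _
    rcases Nat.eq_zero_or_pos j with hj | hj
    · subst hj
      have hsub : (univ.filter (fun v => G.dist u v = 1)) ⊆ G.neighborFinset u := by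
        intro v hv
        simp only [mem_filter] at hv
        simpa using SimpleGraph.dist_eq_one_iff_adj.mp hv.2
      calc (univ.filter (fun v => G.dist u v = 1)).card ≤ (G.neighborFinset u).card :=
            card_le_card hsub
        _ = r := hreg u
        _ = r * (r - 1) ^ (1 - 1) := by simp
    · have hsub : (univ.filter (fun v => G.dist u v = j + 1)) ⊆
          (univ.filter (fun w => G.dist u w = j)).biUnion
            (fun w => (G.neighborFinset w).filter (fun v => G.dist u v = j + 1)) := by
        intro v hv
        simp only [mem_filter] at hv
        obtain ⟨w, hadj, hw⟩ := aux_exists_adj_dist hconn hv.2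
        simp only [mem_biUnion, mem_filter, SimpleGraph.mem_neighborFinset]
        exact ⟨w, ⟨mem_univ w, hw⟩, hadj, hv.2⟩
      have hbound : ∀ w ∈ univ.filter (fun w => G.dist u w = j),
          ((G.neighborFinset w).filter (fun v => G.dist u v = j + 1)).card ≤ r - 1 := by
        intro w hw
        simp only [mem_filter] at hw
        obtain ⟨m, hm⟩ : ∃ m, j = m + 1 := ⟨j - 1, by omega⟩
        obtain ⟨w', hadj', hw'⟩ := aux_exists_adj_dist hconn (hm ▸ hw.2)
        have hsub2 : (G.neighborFinset w).filter (fun v => G.dist u v = j + 1) ⊆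
            (G.neighborFinset w).erase w' := by
          intro v hv
          simp only [mem_filter] at hv
          refine mem_erase.mpr ⟨?_, hv.1⟩
          rintro rfl
          omega
        calc _ ≤ ((G.neighborFinset w).erase w').card := card_le_card hsub2
          _ = (G.neighborFinset w).card - 1 :=
            card_erase_of_mem (by simpa using hadj'.symm)
          _ = r - 1 := by have h := hreg w; rw [SimpleGraph.degree] at h; rw [h]
      calc (univ.filter (fun v => G.dist u v = j + 1)).card
          ≤ _ := card_le_card hsub
        _ ≤ ∑ w ∈ univ.filter (fun w => G.dist u w = j),
              ((G.neighborFinset w).filter (fun v => G.dist u v = j + 1)).card :=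
            card_biUnion_le
        _ ≤ ∑ w ∈ univ.filter (fun w => G.dist u w = j), (r - 1) :=
            sum_le_sum hbound
        _ = (univ.filter (fun w => G.dist u w = j)).card * (r - 1) := by
            rw [sum_const, smul_eq_mul]
        _ ≤ (r * (r - 1) ^ (j - 1)) * (r - 1) :=
            Nat.mul_le_mul_right _ (ih hj)
        _ = r * (r - 1) ^ (j + 1 - 1) := by
            obtain ⟨m, rfl⟩ : ∃ m, j = m + 1 := ⟨j - 1, by omega⟩
            simp only [Nat.add_sub_cancel]
            rw [pow_succ]; ring

lemma aux_levels_le {V : Type*} [Fintype V] (d : V → ℕ) (k : ℕ) :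
    ∑ j ∈ Finset.Icc 1 k, (univ.filter (fun v => j ≤ d v)).card ≤ ∑ v, d v := by
  classical
  have h1 : ∀ j, (univ.filter (fun v => j ≤ d v)).card
      = ∑ v : V, if j ≤ d v then 1 else 0 := by
    intro j; rw [Finset.card_filter]
  calc ∑ j ∈ Finset.Icc 1 k, (univ.filter (fun v => j ≤ d v)).card
      = ∑ j ∈ Finset.Icc 1 k, ∑ v : V, (if j ≤ d v then 1 else 0) := by
        exact Finset.sum_congr rfl fun j _ => h1 j
    _ = ∑ v : V, ∑ j ∈ Finset.Icc 1 k, (if j ≤ d v then 1 else 0) := Finset.sum_comm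
    _ ≤ ∑ v, d v := by
        apply Finset.sum_le_sum
        intro v _
        calc ∑ j ∈ Finset.Icc 1 k, (if j ≤ d v then 1 else 0)
            = ((Finset.Icc 1 k).filter (fun j => j ≤ d v)).card := by
              rw [Finset.card_filter]
          _ ≤ (Finset.Icc 1 (d v)).card := by
              apply Finset.card_le_card
              intro j hj
              simp only [Finset.mem_filter, Finset.mem_Icc] at *
              omega
          _ = d v := by rw [Nat.card_Icc]; omega

lemma aux_level_ge {V : Type*} [Fintype V] [DecidableEq V] {G : SimpleGraph V}
    [DecidableRel G.Adj] {r : ℕ} (hconn : G.Connected) (hreg : G.IsRegularOfDegree r)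
    (u : V) {j : ℕ} (hj : 1 ≤ j) :
    Fintype.card V ≤ 1 + (∑ i ∈ Finset.Icc 1 (j - 1), r * (r - 1) ^ (i - 1))
      + (univ.filter (fun v => j ≤ G.dist u v)).card := by
  classical
  set S : Finset V := univ.filter (fun v => G.dist u v < j) with hS
  set Tset : Finset V := univ.filter (fun v => j ≤ G.dist u v) with hT
  have hsub0 : (univ : Finset V) ⊆ S ∪ Tset := by
    intro v _
    simp only [hS, hT, Finset.mem_union, Finset.mem_filter, Finset.mem_univ, true_and]
    omega
  have hcard : Fintype.card V ≤ S.card + Tset.card := by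
    calc Fintype.card V = (univ : Finset V).card := Finset.card_univ.symm
      _ ≤ (S ∪ Tset).card := Finset.card_le_card hsub0
      _ ≤ S.card + Tset.card := Finset.card_union_le _ _
  have hSsub : S ⊆ insert u ((Finset.Icc 1 (j - 1)).biUnion
      (fun i => univ.filter (fun v => G.dist u v = i))) := by
    intro v hv
    simp only [hS, Finset.mem_filter] at hv
    rcases eq_or_ne v u with rfl | hne
    · exact Finset.mem_insert_self _ _
    · apply Finset.mem_insert_of_mem
      have hpos : 0 < G.dist u v := hconn.pos_dist_of_ne (Ne.symm hne)
      simp only [Finset.mem_biUnion, Finset.mem_Icc, Finset.mem_filter, Finset.mem_univ,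
        true_and]
      exact ⟨G.dist u v, ⟨hpos, by omega⟩, rfl⟩
  have hScard : S.card ≤ 1 + ∑ i ∈ Finset.Icc 1 (j - 1), r * (r - 1) ^ (i - 1) := by
    calc S.card ≤ _ := Finset.card_le_card hSsub
      _ ≤ 1 + ((Finset.Icc 1 (j - 1)).biUnion
            (fun i => univ.filter (fun v => G.dist u v = i))).card := by
          rw [add_comm]; exact Finset.card_insert_le _ _
      _ ≤ 1 + ∑ i ∈ Finset.Icc 1 (j - 1),
            (univ.filter (fun v => G.dist u v = i)).card := by
          exact Nat.add_le_add_left Finset.card_biUnion_le _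
      _ ≤ 1 + ∑ i ∈ Finset.Icc 1 (j - 1), r * (r - 1) ^ (i - 1) := by
          apply Nat.add_le_add_left
          apply Finset.sum_le_sum
          intro i hi
          exact aux_sphere_card hconn hreg u i (Finset.mem_Icc.mp hi).1
  omega

lemma aux_flow_dist {V : Type*} [Fintype V] {G : SimpleGraph V}
    (hconn : G.Connected) {s t : V} {x : ℝ} {g : V → V → ℝ}
    (hst : s ≠ t) (hf : IsFlow G s t x g) :
    x * (G.dist s t : ℝ) ≤ ∑ a, ∑ b, g a b := by
  classical
  obtain ⟨hpos, hsupp, hcons, hval⟩ := hf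
  set φ : V → ℝ := fun w => (G.dist s w : ℝ) with hφ
  set D : V → ℝ := fun w => (∑ a, g a w) - (∑ b, g w b) with hD
  have hDsum : ∑ w, D w = 0 := by
    simp only [hD, Finset.sum_sub_distrib]
    rw [Finset.sum_comm]
    ring
  have hDt : D t = x := by
    have h1 : ∑ w, D w = D t + ∑ w ∈ univ.erase t, D w :=
      (Finset.add_sum_erase univ D (mem_univ t)).symm
    have h2 : ∑ w ∈ univ.erase t, D w = D s := by
      apply Finset.sum_eq_single_of_mem s (Finset.mem_erase.mpr ⟨hst, mem_univ s⟩)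
      intro w hw hws
      have hwt : w ≠ t := (Finset.mem_erase.mp hw).1
      simp only [hD]
      rw [hcons w hws hwt]
      ring
    have h3 : D s = -x := by simp only [hD]; linarith [hval]
    rw [h1, h2, h3] at hDsum
    linarith
  have hkey : ∑ a, ∑ b, g a b * (φ b - φ a) = ∑ w, D w * φ w := by
    simp only [hD, mul_sub, sub_mul, Finset.sum_sub_distrib, Finset.sum_mul]
    congr 1
    rw [Finset.sum_comm]
  have heval : ∑ w, D w * φ w = x * (G.dist s t : ℝ) := by
    rw [Finset.sum_eq_single_of_mem t (mem_univ t)]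
    · rw [hDt]
    · intro w _ hwt
      rcases eq_or_ne w s with rfl | hws
      · simp [hφ]
      · have hz : D w = 0 := by simp only [hD]; rw [hcons w hws hwt]; ring
        rw [hz, zero_mul]
  rw [← heval, ← hkey]
  apply Finset.sum_le_sum
  intro a _
  apply Finset.sum_le_sum
  intro b _
  by_cases hab : G.Adj a b
  · have h1 : φ b - φ a ≤ 1 := by
      have htri : G.dist s b ≤ G.dist s a + 1 := by
        calc G.dist s b ≤ G.dist s a + G.dist a b := hconn.dist_triangle
          _ = G.dist s a + 1 := by rw [SimpleGraph.dist_eq_one_iff_adj.mpr hab]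
      simp only [hφ]
      have := Nat.cast_le (α := ℝ) |>.mpr htri
      push_cast at this
      linarith
    calc g a b * (φ b - φ a) ≤ g a b * 1 :=
        mul_le_mul_of_nonneg_left h1 (hpos a b)
      _ = g a b := mul_one _
  · rw [hsupp a b hab]; simp

lemma aux_identity (a : ℕ → ℝ) (B : ℝ) : ∀ k : ℕ,
    (∑ j ∈ Finset.Icc 1 (k - 1), (j : ℝ) * a j)
      + (k : ℝ) * (B - ∑ j ∈ Finset.Icc 1 (k - 1), a j)
    = ∑ j ∈ Finset.Icc 1 k, (B - ∑ i ∈ Finset.Icc 1 (j - 1), a i) := by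
  intro k
  induction k with
  | zero => simp
  | succ k ih =>
    rw [← Finset.insert_Icc_right_eq_Icc_add_one (by omega : 1 ≤ k + 1),
      Finset.sum_insert (by simp), Nat.add_sub_cancel]
    rcases Nat.eq_zero_or_pos k with rfl | hk
    · simp
    · obtain ⟨m, rfl⟩ : ∃ m, k = m + 1 := ⟨k - 1, by omega⟩
      rw [Nat.add_sub_cancel] at ih
      rw [← Finset.insert_Icc_right_eq_Icc_add_one (by omega : 1 ≤ m + 1)] at ih ⊢
      simp only [Finset.sum_insert (show (m+1) ∉ Finset.Icc 1 m by simp),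
        Nat.add_sub_cancel] at ih ⊢
      push_cast at ih ⊢
      linear_combination ih

/-- Throughput upper bound `T ≤ Nr/(f·d*)` for all-to-all traffic on a
connected `r`-regular graph on `N ≥ 2` vertices: for a concurrent
multicommodity flow with one commodity per ordered pair of distinct vertices,
respecting unit capacities, with every commodity value at least `T ≥ 0`, we
have for every `k ≥ 1` that
`T · (∑_{j=1}^{k−1} j·r·(r−1)^{j−1} + k·R) ≤ r`, where
`R = (N−1) − ∑_{j=1}^{k−1} r·(r−1)^{j−1}`. -/
theorem stmt_6 {V : Type*} [Fintype V] [DecidableEq V] (G : SimpleGraph V)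
    [DecidableRel G.Adj] (N r : ℕ) (hN : Fintype.card V = N) (hN2 : 2 ≤ N)
    (hconn : G.Connected) (hreg : G.IsRegularOfDegree r)
    (x : V → V → ℝ) (g : V → V → V → V → ℝ)
    (hflow : ∀ u v, u ≠ v → IsFlow G u v (x u v) (g u v))
    (hcap : ∀ a b, (∑ p ∈ univ.offDiag, g p.1 p.2 a b) ≤ 1)
    (T : ℝ) (hT : 0 ≤ T) (hTx : ∀ u v, u ≠ v → T ≤ x u v)
    (k : ℕ) (hk : 1 ≤ k) :
    T * ((∑ j ∈ Finset.Icc 1 (k - 1), (j : ℝ) * (r : ℝ) * ((r : ℝ) - 1) ^ (j - 1))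
          + (k : ℝ) * (((N : ℝ) - 1)
              - ∑ j ∈ Finset.Icc 1 (k - 1), (r : ℝ) * ((r : ℝ) - 1) ^ (j - 1)))
      ≤ (r : ℝ) := by
  classical
  -- r ≥ 1
  have hr1 : 1 ≤ r := by
    obtain ⟨u0, v0, huv⟩ := Fintype.exists_pair_of_one_lt_card
      (by omega : 1 < Fintype.card V)
    have hd : 0 < G.dist u0 v0 := hconn.pos_dist_of_ne huv
    obtain ⟨m, hm⟩ : ∃ m, G.dist u0 v0 = m + 1 := ⟨G.dist u0 v0 - 1, by omega⟩
    obtain ⟨w, hadj, -⟩ := aux_exists_adj_dist hconn hm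
    have hdeg : 0 < G.degree v0 := by
      rw [SimpleGraph.degree_pos_iff_exists_adj]
      exact ⟨w, hadj.symm⟩
    rw [hreg v0] at hdeg
    omega
  have hNpos : (0 : ℝ) < N := by
    have : (0 : ℕ) < N := by omega
    exact_mod_cast this
  -- the coefficient rewritten as a sum over levels
  have hid := aux_identity (fun j => (r : ℝ) * ((r : ℝ) - 1) ^ (j - 1)) ((N : ℝ) - 1) k
  simp only at hid
  have hC : (∑ j ∈ Finset.Icc 1 (k - 1), (j : ℝ) * (r : ℝ) * ((r : ℝ) - 1) ^ (j - 1))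
        + (k : ℝ) * (((N : ℝ) - 1)
            - ∑ j ∈ Finset.Icc 1 (k - 1), (r : ℝ) * ((r : ℝ) - 1) ^ (j - 1))
      = ∑ j ∈ Finset.Icc 1 k, (((N : ℝ) - 1)
            - ∑ i ∈ Finset.Icc 1 (j - 1), (r : ℝ) * ((r : ℝ) - 1) ^ (i - 1)) := by
    rw [← hid]
    congr 1
    exact Finset.sum_congr rfl fun j _ => mul_assoc _ _ _
  -- per-source distance-sum lower bound
  have hkey : ∀ u : V,
      (∑ j ∈ Finset.Icc 1 k, (((N : ℝ) - 1)
          - ∑ i ∈ Finset.Icc 1 (j - 1), (r : ℝ) * ((r : ℝ) - 1) ^ (i - 1)))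
        ≤ ∑ v, (G.dist u v : ℝ) := by
    intro u
    have hcast : ∀ i : ℕ, ((r * (r - 1) ^ (i - 1) : ℕ) : ℝ)
        = (r : ℝ) * ((r : ℝ) - 1) ^ (i - 1) := by
      intro i
      push_cast [Nat.cast_sub hr1]
      ring
    calc (∑ j ∈ Finset.Icc 1 k, (((N : ℝ) - 1)
            - ∑ i ∈ Finset.Icc 1 (j - 1), (r : ℝ) * ((r : ℝ) - 1) ^ (i - 1)))
        ≤ ∑ j ∈ Finset.Icc 1 k,
            ((univ.filter (fun v => j ≤ G.dist u v)).card : ℝ) := by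
          apply Finset.sum_le_sum
          intro j hj
          have hj1 : 1 ≤ j := (Finset.mem_Icc.mp hj).1
          have hlev := aux_level_ge hconn hreg u hj1
          rw [hN] at hlev
          have hcs : ((∑ i ∈ Finset.Icc 1 (j - 1), r * (r - 1) ^ (i - 1) : ℕ) : ℝ)
              = ∑ i ∈ Finset.Icc 1 (j - 1), (r : ℝ) * ((r : ℝ) - 1) ^ (i - 1) := by
            rw [Nat.cast_sum]
            exact Finset.sum_congr rfl fun i _ => hcast i
          have hcast2 : (N : ℝ) ≤ 1
              + (∑ i ∈ Finset.Icc 1 (j - 1), (r : ℝ) * ((r : ℝ) - 1) ^ (i - 1))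
              + ((univ.filter (fun v => j ≤ G.dist u v)).card : ℝ) := by
            calc (N : ℝ) ≤ ((1 + (∑ i ∈ Finset.Icc 1 (j - 1), r * (r - 1) ^ (i - 1))
                  + (univ.filter (fun v => j ≤ G.dist u v)).card : ℕ) : ℝ) :=
                Nat.cast_le.mpr hlev
              _ = _ := by push_cast [hcs]; ring
          linarith
      _ = ((∑ j ∈ Finset.Icc 1 k,
            (univ.filter (fun v => j ≤ G.dist u v)).card : ℕ) : ℝ) := by
          push_cast; rfl
      _ ≤ ((∑ v, G.dist u v : ℕ) : ℝ) :=
          Nat.cast_le.mpr (aux_levels_le (fun v => G.dist u v) k)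
      _ = ∑ v, (G.dist u v : ℝ) := by push_cast; rfl
  -- Theorem 1: capacity bound
  have hT1 : ∑ p ∈ univ.offDiag, T * (G.dist p.1 p.2 : ℝ) ≤ (N : ℝ) * r := by
    calc ∑ p ∈ univ.offDiag, T * (G.dist p.1 p.2 : ℝ)
        ≤ ∑ p ∈ univ.offDiag, ∑ a, ∑ b, g p.1 p.2 a b := by
          apply Finset.sum_le_sum
          intro p hp
          have hne : p.1 ≠ p.2 := (Finset.mem_offDiag.mp hp).2.2
          calc T * (G.dist p.1 p.2 : ℝ)
              ≤ x p.1 p.2 * (G.dist p.1 p.2 : ℝ) :=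
                mul_le_mul_of_nonneg_right (hTx _ _ hne) (Nat.cast_nonneg _)
            _ ≤ ∑ a, ∑ b, g p.1 p.2 a b :=
                aux_flow_dist hconn hne (hflow p.1 p.2 hne)
      _ = ∑ a : V, ∑ b : V, ∑ p ∈ univ.offDiag, g p.1 p.2 a b := by
          rw [Finset.sum_comm]
          exact Finset.sum_congr rfl fun a _ => Finset.sum_comm
      _ ≤ ∑ a : V, ∑ b : V, (if G.Adj a b then (1 : ℝ) else 0) := by
          apply Finset.sum_le_sum
          intro a _
          apply Finset.sum_le_sum
          intro b _
          by_cases hab : G.Adj a b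
          · simpa [hab] using hcap a b
          · simp only [hab, if_false]
            apply le_of_eq
            apply Finset.sum_eq_zero
            intro p hp
            exact (hflow p.1 p.2 (Finset.mem_offDiag.mp hp).2.2).2.1 a b hab
      _ = ∑ a : V, ((G.neighborFinset a).card : ℝ) := by
          apply Finset.sum_congr rfl
          intro a _
          rw [Finset.sum_boole, SimpleGraph.neighborFinset_eq_filter]
      _ = (N : ℝ) * r := by
          have hdeg : ∀ a : V, ((G.neighborFinset a).card : ℝ) = (r : ℝ) := by
            intro a
            have h := hreg a
            rw [SimpleGraph.degree] at h
            rw [h]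
          rw [Finset.sum_congr rfl fun a _ => hdeg a, Finset.sum_const,
            Finset.card_univ, hN, nsmul_eq_mul]
  -- off-diagonal sum of distances equals double sum
  have hsplit : ∑ p ∈ univ.offDiag, T * (G.dist p.1 p.2 : ℝ)
      = T * ∑ u : V, ∑ v : V, (G.dist u v : ℝ) := by
    rw [Finset.mul_sum]
    have h1 : ∑ p ∈ univ.offDiag, T * (G.dist p.1 p.2 : ℝ)
        = ∑ p ∈ univ ×ˢ univ, T * (G.dist p.1 p.2 : ℝ) := by
      apply Finset.sum_subset
      · intro p hp
        have := Finset.mem_offDiag.mp hp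
        exact Finset.mem_product.mpr ⟨this.1, this.2.1⟩
      · intro p hp hnp
        have hp' := Finset.mem_product.mp hp
        have : p.1 = p.2 := by
          by_contra hne
          exact hnp (Finset.mem_offDiag.mpr ⟨hp'.1, hp'.2, hne⟩)
        rw [this, SimpleGraph.dist_self]
        simp
    rw [h1, Finset.sum_product]
    exact Finset.sum_congr rfl fun u _ => (Finset.mul_sum _ _ _).symm
  -- combine
  rw [hC]
  set Q : ℝ := ∑ j ∈ Finset.Icc 1 k, (((N : ℝ) - 1)
      - ∑ i ∈ Finset.Icc 1 (j - 1), (r : ℝ) * ((r : ℝ) - 1) ^ (i - 1)) with hQ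
  have hfinal : (N : ℝ) * (T * Q) ≤ (N : ℝ) * r := by
    have hNQ : (N : ℝ) * Q ≤ ∑ u : V, ∑ v : V, (G.dist u v : ℝ) := by
      calc (N : ℝ) * Q = ∑ _u : V, Q := by
            rw [Finset.sum_const, Finset.card_univ, hN, nsmul_eq_mul]
        _ ≤ ∑ u : V, ∑ v : V, (G.dist u v : ℝ) := Finset.sum_le_sum fun u _ => hkey u
    calc (N : ℝ) * (T * Q) = T * ((N : ℝ) * Q) := by ring
      _ ≤ T * ∑ u : V, ∑ v : V, (G.dist u v : ℝ) := mul_le_mul_of_nonneg_left hNQ hT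
      _ = ∑ p ∈ univ.offDiag, T * (G.dist p.1 p.2 : ℝ) := hsplit.symm
      _ ≤ (N : ℝ) * r := hT1
  exact le_of_mul_le_mul_left hfinal hNpos
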